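/- For all real c ≥ 7/4, f_c(x) = 1 - c x^2 has a periodic point of least period 3. -/

import Mathlib

set_option maxHeartbeats 1000000


noncomputable def f (c x : ℝ) : ℝ := 1 - c * x ^ 2

/-- The degree-6 factor of `f^[3] x - x` after dividing out `f x - x`. -/
noncomputable def Pfun (c x : ℝ) : ℝ :=
  c^6*x^6 - c^5*x^5 + (c^4 - 3*c^5)*x^4 + (2*c^4 - c^3)*x^3
    + (3*c^4 - 3*c^3 + c^2)*x^2 + (-c^3 + 2*c^2 - c)*x + (1 - c + 2*c^2 - c^3)

noncomputable def Afun (c u : ℝ) : ℝ := u^3 - u^2/2 + (3/8 - 3*c/2)*u + (c/4 - 5/16)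

noncomputable def Bfun (c u : ℝ) : ℝ :=
  (12*c - 5)*u^2 - (4*c - 7)*u - 16*c^2 + 3*c - 33/4

lemma key_factor (c x : ℝ) : (f c)^[3] x - x = (f c x - x) * Pfun c x := by
  show f c (f c (f c x)) - x = _
  simp only [f, Pfun]; ring

lemma sos_decomp (c x : ℝ) :
    Pfun c x = (Afun c (c*x))^2 + (4*c - 7)/64 * Bfun c (c*x) := by
  simp only [Pfun, Afun, Bfun]; ring

lemma fixed_value (c x : ℝ) (h : f c x = x) :
    Pfun c x = 4*c^2*x^2 - 2*c*x + 1 := by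
  have h' : 1 - c * x^2 - x = 0 := by simp only [f] at h; linarith
  have : Pfun c x - (4*c^2*x^2 - 2*c*x + 1) =
      (1 - c*x^2 - x) * (-c^5*x^4 + 2*c^4*x^3 + (2*c^4 - 3*c^3)*x^2
        + (-2*c^3 + 4*c^2)*x + (-c^3 + 2*c^2 - c)) := by
    simp only [Pfun]; ring
  rw [h'] at this; linarith

theorem period_three_exists (c : ℝ) (hc : 7/4 ≤ c) :
    ∃ x : ℝ, (f c)^[3] x = x ∧ f c x ≠ x := by
  have hcpos : (0:ℝ) < c := by linarith
  -- find a root u₀ of Afun c in [0, 1/4]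
  have hAcont : ContinuousOn (Afun c) (Set.Icc 0 (1/4)) := by
    apply Continuous.continuousOn; unfold Afun; fun_prop
  have hA0 : 0 < Afun c 0 := by simp only [Afun]; nlinarith
  have hA14 : Afun c (1/4) < 0 := by simp only [Afun]; nlinarith
  have hsub := intermediate_value_Icc' (by norm_num : (0:ℝ) ≤ 1/4) hAcont
  have h0mem : (0:ℝ) ∈ Set.Icc (Afun c (1/4)) (Afun c 0) := ⟨le_of_lt hA14, le_of_lt hA0⟩
  obtain ⟨u₀, hu₀mem, hu₀⟩ := hsub h0mem
  obtain ⟨hu₀0, hu₀14⟩ := hu₀mem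
  -- the point x₀ = u₀ / c satisfies Pfun c x₀ ≤ 0
  set x₀ : ℝ := u₀ / c with hx₀def
  have hcx₀ : c * x₀ = u₀ := by rw [hx₀def]; field_simp
  have hB : Bfun c u₀ ≤ 0 := by
    simp only [Bfun]
    have hu2 : u₀^2 ≤ 1/16 := by nlinarith
    have h1 : (12*c - 5) * u₀^2 ≤ (12*c - 5) / 16 := by nlinarith [mul_nonneg (show (0:ℝ) ≤ 12*c-5 by linarith) (show (0:ℝ) ≤ 1/16 - u₀^2 by linarith)]
    have h2 : 0 ≤ (4*c - 7) * u₀ := mul_nonneg (by linarith) hu₀0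
    nlinarith [sq_nonneg (c - 7/4)]
  have hPx₀ : Pfun c x₀ ≤ 0 := by
    rw [sos_decomp, hcx₀, hu₀]
    have h47 : (0:ℝ) ≤ (4*c - 7)/64 := by linarith
    nlinarith
  -- Pfun c 2 ≥ 0
  have hP2 : 0 ≤ Pfun c 2 := by
    rw [sos_decomp]
    have hB2 : 0 ≤ Bfun c (c*2) := by simp only [Bfun]; nlinarith
    have h47 : (0:ℝ) ≤ (4*c - 7)/64 := by linarith
    nlinarith [sq_nonneg (Afun c (c*2))]
  -- x₀ ≤ 2
  have hx₀le : x₀ ≤ 2 := by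
    rw [hx₀def, div_le_iff₀ hcpos]; nlinarith
  -- IVT for Pfun c on [x₀, 2]
  have hPcont : ContinuousOn (Pfun c) (Set.Icc x₀ 2) := by
    apply Continuous.continuousOn; unfold Pfun; fun_prop
  obtain ⟨x, _, hPx⟩ := intermediate_value_Icc hx₀le hPcont ⟨hPx₀, hP2⟩
  refine ⟨x, ?_, ?_⟩
  · have := key_factor c x
    rw [hPx, mul_zero] at this; linarith
  · intro hfix
    have h1 := fixed_value c x hfix
    rw [hPx] at h1
    nlinarith [sq_nonneg (2*c*x - 1/2)]
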